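/- Suppose f : R^d → R is continuously differentiable with L-Lipschitz gradient and satisfies the μ-Polyak–Łojasiewicz inequality ‖∇f(x)‖² ≥ 2μ(f(x) − f*) for all x, where f* = inf f is attained at some x*. Then f satisfies the quadratic growth condition: ‖x − x*‖² ≤ (2/μ)(f(x) − f*) for all x, whenever x* is the unique minimizer and the PL condition implies this error bound. -/

import Mathlib

open InnerProductSpace Filter Topology

local notation "⟪" x ", " y "⟫" => @inner ℝ _ _ x y

lemma descent_aux {d : ℕ} (f : EuclideanSpace ℝ (Fin d) → ℝ) (L : ℝ)
    (hdiff : ContDiff ℝ 1 f)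
    (hlip : ∀ x y, ‖gradient f x - gradient f y‖ ≤ L * ‖x - y‖)
    (x v : EuclideanSpace ℝ (Fin d)) :
    f (x + v) ≤ f x + ⟪gradient f x, v⟫ + L / 2 * ‖v‖ ^ 2 := by
  have hdf : ∀ y, HasGradientAt f (gradient f y) y :=
    fun y => (hdiff.differentiable one_ne_zero y).hasGradientAt
  have hder : ∀ t : ℝ, HasDerivAt (fun t : ℝ => f (x + t • v))
      ⟪gradient f (x + t • v), v⟫ t := by
    intro t
    have hline : HasDerivAt (fun t : ℝ => x + t • v) v t := by
      simpa using ((hasDerivAt_id t).smul_const v).const_add x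
    have := (hdf (x + t • v)).hasFDerivAt.comp_hasDerivAt t hline
    simpa [Function.comp_def] using this
  have hgc : Continuous (gradient f) := by
    have h1 : Continuous (fderiv ℝ f) := hdiff.continuous_fderiv one_ne_zero
    exact ((toDual ℝ (EuclideanSpace ℝ (Fin d))).symm.continuous).comp h1
  have hcont : Continuous fun t : ℝ => ⟪gradient f (x + t • v), v⟫ := by
    apply Continuous.inner
    · exact hgc.comp (by continuity)
    · exact continuous_const
  have key : f (x + v) - f x = ∫ t in (0:ℝ)..1, ⟪gradient f (x + t • v), v⟫ := by
    have := intervalIntegral.integral_eq_sub_of_hasDerivAt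
      (f := fun t : ℝ => f (x + t • v)) (fun t _ => hder t)
      (hcont.intervalIntegrable 0 1)
    rw [this]; norm_num
  have hcont2 : Continuous fun t : ℝ => ⟪gradient f x, v⟫ + L * t * ‖v‖ ^ 2 := by
    continuity
  have hb : (∫ t in (0:ℝ)..1, ⟪gradient f (x + t • v), v⟫)
      ≤ ∫ t in (0:ℝ)..1, (⟪gradient f x, v⟫ + L * t * ‖v‖ ^ 2) := by
    apply intervalIntegral.integral_mono_on zero_le_one
      (hcont.intervalIntegrable 0 1) (hcont2.intervalIntegrable 0 1)
    intro t ht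
    have h1 : ⟪gradient f (x + t • v), v⟫ - ⟪gradient f x, v⟫
        = ⟪gradient f (x + t • v) - gradient f x, v⟫ := (inner_sub_left _ _ _).symm
    have h2 : ⟪gradient f (x + t • v) - gradient f x, v⟫
        ≤ ‖gradient f (x + t • v) - gradient f x‖ * ‖v‖ := real_inner_le_norm _ _
    have h3 : ‖gradient f (x + t • v) - gradient f x‖ ≤ L * ‖t • v‖ := by
      simpa using hlip (x + t • v) x
    have h4 : ‖t • v‖ = t * ‖v‖ := by
      rw [norm_smul, Real.norm_eq_abs, abs_of_nonneg ht.1]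
    have h5 : L * ‖t • v‖ * ‖v‖ = L * t * ‖v‖ ^ 2 := by rw [h4]; ring
    have h6 := mul_le_mul_of_nonneg_right h3 (norm_nonneg v)
    linarith
  have hc : (∫ t in (0:ℝ)..1, (⟪gradient f x, v⟫ + L * t * ‖v‖ ^ 2))
      = ⟪gradient f x, v⟫ + L / 2 * ‖v‖ ^ 2 := by
    have : (fun t : ℝ => ⟪gradient f x, v⟫ + L * t * ‖v‖ ^ 2)
        = fun t : ℝ => ⟪gradient f x, v⟫ + (L * ‖v‖ ^ 2) * t := by
      ext t; ring
    rw [this, intervalIntegral.integral_add (g := fun t : ℝ => (L * ‖v‖ ^ 2) * t) intervalIntegrable_const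
      ((continuous_const.mul continuous_id').intervalIntegrable 0 1)]
    rw [intervalIntegral.integral_const_mul, integral_id]
    simp
    ring
  linarith [key, hb, hc.le, hc.ge]

set_option maxHeartbeats 1000000 in
theorem pl_implies_quadratic_growth (d : ℕ) (f : EuclideanSpace ℝ (Fin d) → ℝ)
    (L μ : ℝ) (hμ : 0 < μ) (hL : 0 < L)
    (hdiff : ContDiff ℝ 1 f)
    (hlip : ∀ x y, ‖gradient f x - gradient f y‖ ≤ L * ‖x - y‖)
    (xstar : EuclideanSpace ℝ (Fin d))
    (hmin : ∀ x, f xstar ≤ f x)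
    (huniq : ∀ x, f x = f xstar → x = xstar)
    (hPL : ∀ x, ‖gradient f x‖ ^ 2 ≥ 2 * μ * (f x - f xstar)) :
    ∀ x, ‖x - xstar‖ ^ 2 ≤ (2 / μ) * (f x - f xstar) := by
  intro x0
  have hΔ0 : 0 ≤ f x0 - f xstar := sub_nonneg.2 (hmin x0)
  -- descent step fact
  have hfact_step : ∀ η : ℝ, 0 ≤ η → ∀ y,
      f (y - η • gradient f y) ≤ f y - η * (1 - L * η / 2) * ‖gradient f y‖ ^ 2 := by
    intro η hη y
    have h := descent_aux f L hdiff hlip y (-(η • gradient f y))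
    have h1 : ⟪gradient f y, -(η • gradient f y)⟫ = -(η * ‖gradient f y‖ ^ 2) := by
      rw [inner_neg_right, real_inner_smul_right, real_inner_self_eq_norm_sq]
    have h2 : ‖-(η • gradient f y)‖ ^ 2 = η ^ 2 * ‖gradient f y‖ ^ 2 := by
      rw [norm_neg, norm_smul, Real.norm_eq_abs, mul_pow, sq_abs]
    have h3 : y + -(η • gradient f y) = y - η • gradient f y := (sub_eq_add_neg _ _).symm
    rw [h1, h2, h3] at h
    calc f (y - η • gradient f y)
        ≤ f y + -(η * ‖gradient f y‖ ^ 2) + L / 2 * (η ^ 2 * ‖gradient f y‖ ^ 2) := h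
      _ = f y - η * (1 - L * η / 2) * ‖gradient f y‖ ^ 2 := by ring
  -- gradient bound fact
  have hgrad_sq : ∀ y, ‖gradient f y‖ ^ 2 ≤ 2 * L * (f y - f xstar) := by
    intro y
    have h := hfact_step (1 / L) (by positivity) y
    have h2 := hmin (y - (1 / L) • gradient f y)
    have hc : (1 / L) * (1 - L * (1 / L) / 2) = 1 / (2 * L) := by
      field_simp; ring
    rw [hc] at h
    have h3 : 1 / (2 * L) * ‖gradient f y‖ ^ 2 ≤ f y - f xstar := by linarith
    have h4 := mul_le_mul_of_nonneg_left h3 (by positivity : (0:ℝ) ≤ 2 * L)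
    have h5 : 2 * L * (1 / (2 * L) * ‖gradient f y‖ ^ 2) = ‖gradient f y‖ ^ 2 := by
      field_simp
    linarith
  -- key per-η bound
  have key : ∀ η : ℝ, 0 < η → η ≤ 1 / (2 * L) → η ≤ 1 / (2 * μ) →
      (1 - L * η / 2) * (Real.sqrt (2 * μ) / 2) * ‖x0 - xstar‖
        ≤ Real.sqrt (f x0 - f xstar) := by
    intro η hη hηL hημ
    set X : ℕ → EuclideanSpace ℝ (Fin d) :=
      fun n => (fun y => y - η • gradient f y)^[n] x0 with hXdef
    have hX0 : X 0 = x0 := rfl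
    have hXs : ∀ n, X (n + 1) = X n - η • gradient f (X n) :=
      fun n => Function.iterate_succ_apply' _ _ _
    set D : ℕ → ℝ := fun n => f (X n) - f xstar with hDdef
    have hDn : ∀ n, D n = f (X n) - f xstar := fun n => rfl
    have hDnn : ∀ n, 0 ≤ D n := fun n => sub_nonneg.2 (hmin _)
    have hLη : L * η ≤ 1 / 2 := by
      have := mul_le_mul_of_nonneg_left hηL hL.le
      calc L * η ≤ L * (1 / (2 * L)) := this
        _ = 1 / 2 := by field_simp
    have hμη : μ * η ≤ 1 / 2 := by
      have := mul_le_mul_of_nonneg_left hημ hμ.le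
      calc μ * η ≤ μ * (1 / (2 * μ)) := this
        _ = 1 / 2 := by field_simp
    set c := η * (1 - L * η / 2) with hcdef
    have hcpos : 0 < c := by
      rw [hcdef]; nlinarith
    have hstep : ∀ n, D (n + 1) ≤ D n - c * ‖gradient f (X n)‖ ^ 2 := by
      intro n
      have h := hfact_step η hη.le (X n)
      rw [← hXs n, ← hcdef] at h
      rw [hDn (n + 1), hDn n]
      linarith
    set r := 1 - 2 * μ * c with hrdef
    have hr0 : 0 ≤ r := by
      rw [hrdef, hcdef]; nlinarith
    have hr1 : r < 1 := by
      rw [hrdef]; nlinarith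
    have hDdec : ∀ n, D (n + 1) ≤ r * D n := by
      intro n
      have hpl : 2 * μ * D n ≤ ‖gradient f (X n)‖ ^ 2 := by
        rw [hDn n]; exact hPL (X n)
      have h := hstep n
      have := mul_le_mul_of_nonneg_left hpl hcpos.le
      rw [hrdef]; nlinarith
    have hDgeo : ∀ n, D n ≤ r ^ n * D 0 := by
      intro n
      induction n with
      | zero => simp
      | succ k ih =>
        calc D (k + 1) ≤ r * D k := hDdec k
          _ ≤ r * (r ^ k * D 0) := mul_le_mul_of_nonneg_left ih hr0
          _ = r ^ (k + 1) * D 0 := by ring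
    have hstepnorm : ∀ n, dist (X n) (X (n + 1)) = η * ‖gradient f (X n)‖ := by
      intro n
      rw [dist_eq_norm, hXs n]
      have : X n - (X n - η • gradient f (X n)) = η • gradient f (X n) := by abel
      rw [this, norm_smul, Real.norm_eq_abs, abs_of_nonneg hη.le]
    -- convergence of X to xstar
    have hsqrt_pow : ∀ n : ℕ, Real.sqrt (r ^ n) = Real.sqrt r ^ n := by
      intro n
      have h1 : (Real.sqrt r ^ n) ^ 2 = r ^ n := by
        rw [← pow_mul, mul_comm n 2, pow_mul, Real.sq_sqrt hr0]
      rw [← h1, Real.sqrt_sq (pow_nonneg (Real.sqrt_nonneg r) n)]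
    have hgb : ∀ n, ‖gradient f (X n)‖ ≤ Real.sqrt (2 * L * D 0) * Real.sqrt r ^ n := by
      intro n
      have h1 : ‖gradient f (X n)‖ ^ 2 ≤ 2 * L * D 0 * r ^ n := by
        have := hgrad_sq (X n)
        rw [← hDn n] at this
        nlinarith [hDgeo n]
      calc ‖gradient f (X n)‖ = Real.sqrt (‖gradient f (X n)‖ ^ 2) :=
            (Real.sqrt_sq (norm_nonneg _)).symm
        _ ≤ Real.sqrt (2 * L * D 0 * r ^ n) := Real.sqrt_le_sqrt h1
        _ = Real.sqrt (2 * L * D 0) * Real.sqrt (r ^ n) :=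
            Real.sqrt_mul (by positivity) _
        _ = Real.sqrt (2 * L * D 0) * Real.sqrt r ^ n := by rw [hsqrt_pow n]
    have hrr1 : Real.sqrt r < 1 := by
      rw [Real.sqrt_lt' one_pos]; simpa using hr1
    have hcauchy : CauchySeq X := by
      apply cauchySeq_of_le_geometric (Real.sqrt r) (η * Real.sqrt (2 * L * D 0)) hrr1
      intro n
      rw [hstepnorm n]
      have := mul_le_mul_of_nonneg_left (hgb n) hη.le
      calc η * ‖gradient f (X n)‖ ≤ η * (Real.sqrt (2 * L * D 0) * Real.sqrt r ^ n) := this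
        _ = η * Real.sqrt (2 * L * D 0) * Real.sqrt r ^ n := by ring
    obtain ⟨xl, hxl⟩ := cauchySeq_tendsto_of_complete hcauchy
    have hD0' : Tendsto D atTop (𝓝 0) := by
      apply squeeze_zero hDnn hDgeo
      simpa using (tendsto_pow_atTop_nhds_zero_of_lt_one hr0 hr1).mul_const (D 0)
    have hfX : Tendsto (fun n => f (X n)) atTop (𝓝 (f xl)) :=
      (hdiff.continuous.tendsto xl).comp hxl
    have hfX' : Tendsto (fun n => f (X n)) atTop (𝓝 (f xstar)) := by
      have heq : (fun n => f (X n)) = fun n => D n + f xstar := by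
        funext n; rw [hDn n]; ring
      rw [heq]
      simpa using hD0'.add tendsto_const_nhds
    have hxl_eq : xl = xstar := huniq _ (tendsto_nhds_unique hfX hfX')
    -- telescoping sqrt bound
    set K := c * (Real.sqrt (2 * μ) / 2) with hKdef
    have hKnn : 0 ≤ K := by
      rw [hKdef]; positivity
    have hsq_step : ∀ n,
        Real.sqrt (D (n + 1)) + K * ‖gradient f (X n)‖ ≤ Real.sqrt (D n) := by
      intro n
      set a := Real.sqrt (D n) with ha
      set b := Real.sqrt (D (n + 1)) with hbb
      set G := ‖gradient f (X n)‖ with hG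
      have ha2 : a ^ 2 = D n := Real.sq_sqrt (hDnn n)
      have hb2 : b ^ 2 = D (n + 1) := Real.sq_sqrt (hDnn _)
      have ha0 : 0 ≤ a := Real.sqrt_nonneg _
      have hb0 : 0 ≤ b := Real.sqrt_nonneg _
      have hG0 : 0 ≤ G := norm_nonneg _
      have hst := hstep n
      rw [← hG] at hst
      have hpl : 2 * μ * D n ≤ G ^ 2 := by rw [hDn n]; exact hPL (X n)
      have hba : b ≤ a := Real.sqrt_le_sqrt (by nlinarith)
      have h2μa : Real.sqrt (2 * μ) * a ≤ G := by
        have h := Real.sqrt_le_sqrt hpl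
        rwa [Real.sqrt_mul (by positivity), ← ha, Real.sqrt_sq hG0] at h
      rcases eq_or_lt_of_le (add_nonneg ha0 hb0) with h | h
      · have haz : a = 0 := by linarith
        have hbz : b = 0 := by linarith
        have hDz : D n = 0 := by rw [← ha2, haz]; ring
        have hG2 : G ^ 2 ≤ 0 := by nlinarith [hDnn (n + 1), hcpos]
        have hGz : G = 0 := pow_eq_zero_iff two_ne_zero |>.mp
          (le_antisymm hG2 (sq_nonneg G))
        rw [hbz, hGz]; simpa using ha0
      · have step1 : K * G * (a + b) ≤ K * G * (2 * a) :=
          mul_le_mul_of_nonneg_left (by linarith) (mul_nonneg hKnn hG0)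
        have step2 : K * G * (2 * a) = c * G * (Real.sqrt (2 * μ) * a) := by
          rw [hKdef]; ring
        have step3 : c * G * (Real.sqrt (2 * μ) * a) ≤ c * G * G :=
          mul_le_mul_of_nonneg_left h2μa (mul_nonneg hcpos.le hG0)
        have step4 : c * G * G ≤ D n - D (n + 1) := by nlinarith
        have step5 : D n - D (n + 1) = (a - b) * (a + b) := by
          rw [← ha2, ← hb2]; ring
        have hfinal : K * G * (a + b) ≤ (a - b) * (a + b) := by linarith
        have := le_of_mul_le_mul_right
          (by linarith [hfinal] : K * G * (a + b) ≤ (a - b) * (a + b)) h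
        linarith
    have htel : ∀ N, Real.sqrt (D N)
        + K * ∑ k ∈ Finset.range N, ‖gradient f (X k)‖ ≤ Real.sqrt (D 0) := by
      intro N
      induction N with
      | zero => simp
      | succ k ih =>
        rw [Finset.sum_range_succ]
        have := hsq_step k
        have hrest : 0 ≤ K * ∑ j ∈ Finset.range k, ‖gradient f (X j)‖ :=
          mul_nonneg hKnn (Finset.sum_nonneg fun _ _ => norm_nonneg _)
        nlinarith [this, ih]
    have hdistb : ∀ N, dist (X 0) (X N)
        ≤ η * ∑ k ∈ Finset.range N, ‖gradient f (X k)‖ := by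
      intro N
      calc dist (X 0) (X N) ≤ ∑ k ∈ Finset.range N, dist (X k) (X (k + 1)) :=
            dist_le_range_sum_dist X N
        _ = η * ∑ k ∈ Finset.range N, ‖gradient f (X k)‖ := by
            rw [Finset.mul_sum]
            exact Finset.sum_congr rfl fun k _ => hstepnorm k
    have hfin : ∀ N, (1 - L * η / 2) * (Real.sqrt (2 * μ) / 2) * dist (X 0) (X N)
        ≤ Real.sqrt (D 0) := by
      intro N
      have h1 := htel N
      have h2 := hdistb N
      have hKηnn : 0 ≤ (1 - L * η / 2) * (Real.sqrt (2 * μ) / 2) := by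
        have h3 : 0 ≤ 1 - L * η / 2 := by nlinarith
        positivity
      calc (1 - L * η / 2) * (Real.sqrt (2 * μ) / 2) * dist (X 0) (X N)
          ≤ (1 - L * η / 2) * (Real.sqrt (2 * μ) / 2)
            * (η * ∑ k ∈ Finset.range N, ‖gradient f (X k)‖) :=
            mul_le_mul_of_nonneg_left h2 hKηnn
        _ = K * ∑ k ∈ Finset.range N, ‖gradient f (X k)‖ := by
            rw [hKdef, hcdef]; ring
        _ ≤ Real.sqrt (D 0) := by linarith [Real.sqrt_nonneg (D N)]
    have hlim : Tendsto
        (fun N => (1 - L * η / 2) * (Real.sqrt (2 * μ) / 2) * dist (X 0) (X N))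
        atTop (𝓝 ((1 - L * η / 2) * (Real.sqrt (2 * μ) / 2) * dist x0 xstar)) := by
      apply Tendsto.const_mul
      have : Tendsto (fun N => dist (X 0) (X N)) atTop (𝓝 (dist (X 0) xl)) :=
        Tendsto.dist tendsto_const_nhds hxl
      rw [hxl_eq, hX0] at this
      exact this
    have hle := le_of_tendsto hlim (Filter.Eventually.of_forall hfin)
    have hD00 : D 0 = f x0 - f xstar := by rw [hDn 0, hX0]
    rw [hD00] at hle
    rwa [dist_eq_norm] at hle
  -- let η → 0
  set A := Real.sqrt (2 * μ) / 2 * ‖x0 - xstar‖ with hA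
  set B := Real.sqrt (f x0 - f xstar) with hB
  have hAnn : 0 ≤ A := by rw [hA]; positivity
  have hAB : A ≤ B := by
    refine le_of_forall_pos_le_add ?_
    intro ε hε
    set η := min (1 / (2 * L)) (min (1 / (2 * μ)) (2 * ε / (L * (A + 1)))) with hηdef
    have hη0 : 0 < η := by
      rw [hηdef]
      simp only [lt_min_iff]
      refine ⟨by positivity, by positivity, by positivity⟩
    have h := key η hη0 (min_le_left _ _)
      (le_trans (min_le_right _ _) (min_le_left _ _))
    have h2 : A - L * η / 2 * A ≤ B := by
      have heq : (1 - L * η / 2) * (Real.sqrt (2 * μ) / 2) * ‖x0 - xstar‖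
          = A - L * η / 2 * A := by rw [hA]; ring
      rw [heq] at h; exact h
    have h3 : L * η / 2 * A ≤ ε := by
      have h226 : η ≤ 2 * ε / (L * (A + 1)) :=
        le_trans (min_le_right _ _) (min_le_right _ _)
      have hpos : 0 < L * (A + 1) := by positivity
      rw [le_div_iff₀ hpos] at h226
      nlinarith
    linarith
  have h2 : A ^ 2 ≤ B ^ 2 := by nlinarith [Real.sqrt_nonneg (f x0 - f xstar)]
  have hA2 : A ^ 2 = μ / 2 * ‖x0 - xstar‖ ^ 2 := by
    rw [hA, mul_pow, div_pow, Real.sq_sqrt (by positivity : (0:ℝ) ≤ 2 * μ)]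
    ring
  have hB2 : B ^ 2 = f x0 - f xstar := Real.sq_sqrt hΔ0
  rw [hA2, hB2] at h2
  rw [div_mul_eq_mul_div, le_div_iff₀ hμ]
  nlinarith
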